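/- Let P0, P1 ⊆ R^{d-1} be (d-1)-polytopes, P their Cayley embedding, F0 a nonempty face of P0 and F1 a nonempty face of P1, and F the Cayley embedding of F0 and F1. Then F is a facet of P (a face of dimension d-1) if and only if C_{P0}(F0) ∩ C_{P1}(F1) = {λ r : λ > 0} for some nonzero r ∈ R^{d-1}. -/

import Mathlib

open Set Pointwise

noncomputable section

/-- Dot product of two vectors in `Fin n → ℝ`. -/
def dotp {n : ℕ} (c x : Fin n → ℝ) : ℝ := ∑ i, c i * x i

/-- Dimension of a subset of `Fin n → ℝ` (dimension of its affine hull). -/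
def sdim {n : ℕ} (S : Set (Fin n → ℝ)) : ℕ := Module.finrank ℝ (vectorSpan ℝ S)

/-- A polytope is the convex hull of a finite set. -/
def IsPolytope {n : ℕ} (P : Set (Fin n → ℝ)) : Prop :=
  ∃ S : Finset (Fin n → ℝ), P = convexHull ℝ (S : Set (Fin n → ℝ))

/-- The set of maximizers of the linear functional `dotp c` over `P`. -/
def maxFace {n : ℕ} (P : Set (Fin n → ℝ)) (c : Fin n → ℝ) : Set (Fin n → ℝ) :=
  {x ∈ P | ∀ y ∈ P, dotp c y ≤ dotp c x}

/-- `F` is a (nonempty, possibly improper) face of the polytope `P`: the set of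
maximizers of some linear functional over `P`. -/
def IsFaceOf {n : ℕ} (P F : Set (Fin n → ℝ)) : Prop := ∃ c, F = maxFace P c

/-- The optimality cone of a face `F` of `P`: the set of `c` whose set of maximizers
over `P` is exactly `F`. -/
def optCone {n : ℕ} (P F : Set (Fin n → ℝ)) : Set (Fin n → ℝ) := {c | maxFace P c = F}

/-- A facet: a nonempty face of codimension 1. -/
def IsFacetOf {n : ℕ} (P F : Set (Fin n → ℝ)) : Prop :=
  IsFaceOf P F ∧ F.Nonempty ∧ sdim F + 1 = sdim P

/-- Embedding of a subset of `Fin d → ℝ` at height `α` in `Fin (d+1) → ℝ`. -/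
def cay {d : ℕ} (α : ℝ) (S : Set (Fin d → ℝ)) : Set (Fin (d + 1) → ℝ) :=
  (fun x => Fin.snoc x α) '' S

/-- Orthogonal projection onto the first `d` coordinates. -/
def projd {d m : ℕ} (x : Fin (d + m) → ℝ) : Fin d → ℝ := fun i => x (Fin.castAdd m i)

/-- Width of a set in direction `c`. -/
def width {n : ℕ} (S : Set (Fin n → ℝ)) (c : Fin n → ℝ) : ℝ :=
  sSup (dotp c '' S) - sInf (dotp c '' S)

/-- `P'` is an `ε`-approximation of `P`. -/
def EpsApprox {n : ℕ} (ε : ℝ) (P P' : Set (Fin n → ℝ)) : Prop :=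
  P ⊆ P' ∧ ∀ c, width P' c ≤ (1 + ε) * width P c

/-- Binary entropy function (with the convention `0 · log₂ 0 = 0`, which holds for
`Real.logb` since `Real.logb 2 0 = 0`). -/
def binEnt (p : ℝ) : ℝ := -(p * Real.logb 2 p) - (1 - p) * Real.logb 2 (1 - p)
section Aux

variable {n : ℕ}

/-- `dotp c` as a linear map. -/
def dlin (c : Fin n → ℝ) : (Fin n → ℝ) →ₗ[ℝ] ℝ where
  toFun x := dotp c x
  map_add' x y := by simp [dotp, mul_add, Finset.sum_add_distrib]
  map_smul' l x := by
    simp [dotp, Finset.mul_sum, mul_left_comm, smul_eq_mul]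

@[simp] lemma dlin_apply (c x : Fin n → ℝ) : dlin c x = dotp c x := rfl

lemma dotp_smul_left (l : ℝ) (c x : Fin n → ℝ) : dotp (l • c) x = l * dotp c x := by
  simp [dotp, Finset.mul_sum, mul_assoc]

lemma dotp_add_left (c c' x : Fin n → ℝ) : dotp (c + c') x = dotp c x + dotp c' x := by
  simp [dotp, add_mul, Finset.sum_add_distrib]

lemma dotp_zero_left (x : Fin n → ℝ) : dotp (0 : Fin n → ℝ) x = 0 := by simp [dotp]

lemma dotp_combo (c a b : Fin n → ℝ) (p q : ℝ) :
    dotp c (p • a + q • b) = p * dotp c a + q * dotp c b := by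
  have := (dlin c).map_add (p • a) (q • b)
  simp only [map_smul, smul_eq_mul, dlin_apply] at this
  simpa using this

lemma dotp_sub_right (c a b : Fin n → ℝ) : dotp c (a - b) = dotp c a - dotp c b := by
  have := (dlin c).map_sub a b
  simpa using this

lemma dotp_snoc {d : ℕ} (c : Fin d → ℝ) (γ : ℝ) (x : Fin d → ℝ) (α : ℝ) :
    dotp (Fin.snoc c γ) (Fin.snoc x α) = dotp c x + γ * α := by
  simp [dotp, Fin.sum_univ_castSucc]

lemma maxFace_subset {P : Set (Fin n → ℝ)} {c : Fin n → ℝ} : maxFace P c ⊆ P :=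
  fun _ hx => hx.1

lemma dotp_eq_on_maxFace {P : Set (Fin n → ℝ)} {c x y : Fin n → ℝ}
    (hx : x ∈ maxFace P c) (hy : y ∈ maxFace P c) : dotp c x = dotp c y :=
  le_antisymm (hy.2 x hx.1) (hx.2 y hy.1)

lemma convex_maxFace {P : Set (Fin n → ℝ)} (hP : Convex ℝ P) (c : Fin n → ℝ) :
    Convex ℝ (maxFace P c) := by
  rintro x hx y hy a b ha hb hab
  refine ⟨hP hx.1 hy.1 ha hb hab, fun z hz => ?_⟩
  rw [dotp_combo]
  have h1 : a * dotp c z ≤ a * dotp c x := mul_le_mul_of_nonneg_left (hx.2 z hz) ha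
  have h2 : b * dotp c z ≤ b * dotp c y := mul_le_mul_of_nonneg_left (hy.2 z hz) hb
  have h3 : a * dotp c z + b * dotp c z = dotp c z := by rw [← add_mul, hab, one_mul]
  linarith

lemma maxFace_smul {P : Set (Fin n → ℝ)} {l : ℝ} (hl : 0 < l) (c : Fin n → ℝ) :
    maxFace P (l • c) = maxFace P c := by
  ext x
  simp only [maxFace, mem_setOf_eq, dotp_smul_left]
  exact ⟨fun ⟨h1, h2⟩ => ⟨h1, fun y hy => (mul_le_mul_iff_right₀ hl).mp (h2 y hy)⟩,
    fun ⟨h1, h2⟩ => ⟨h1, fun y hy => (mul_le_mul_iff_right₀ hl).mpr (h2 y hy)⟩⟩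

lemma maxFace_zero {P : Set (Fin n → ℝ)} : maxFace P (0 : Fin n → ℝ) = P := by
  ext x; simp [maxFace, dotp_zero_left]

end Aux
section Cay

variable {d : ℕ}

lemma snoc_combo (x y : Fin d → ℝ) (α : ℝ) (a b : ℝ) (hab : a + b = 1) :
    a • (Fin.snoc x α : Fin (d+1) → ℝ) + b • (Fin.snoc y α : Fin (d+1) → ℝ)
      = Fin.snoc (a • x + b • y) α := by
  funext i
  cases i using Fin.lastCases with
  | last => simp [Fin.snoc_last, ← add_mul, hab]
  | cast i => simp [Fin.snoc_castSucc]

lemma convex_cay {S : Set (Fin d → ℝ)} (hS : Convex ℝ S) (α : ℝ) : Convex ℝ (cay α S) := by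
  rintro x ⟨x', hx', rfl⟩ y ⟨y', hy', rfl⟩ a b ha hb hab
  exact ⟨a • x' + b • y', hS hx' hy' ha hb hab, (snoc_combo x' y' α a b hab).symm⟩

lemma cay_nonempty {S : Set (Fin d → ℝ)} (hS : S.Nonempty) (α : ℝ) : (cay α S).Nonempty :=
  hS.image _

lemma maxFace_cay (α : ℝ) (S : Set (Fin d → ℝ)) (c : Fin d → ℝ) (γ : ℝ) :
    maxFace (cay α S) (Fin.snoc c γ) = cay α (maxFace S c) := by
  ext z
  constructor
  · rintro ⟨⟨x, hx, rfl⟩, hmax⟩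
    refine ⟨x, ⟨hx, fun y hy => ?_⟩, rfl⟩
    have := hmax (Fin.snoc y α) ⟨y, hy, rfl⟩
    rw [dotp_snoc, dotp_snoc] at this
    linarith
  · rintro ⟨x, hx, rfl⟩
    refine ⟨⟨x, hx.1, rfl⟩, ?_⟩
    rintro z ⟨y, hy, rfl⟩
    rw [dotp_snoc, dotp_snoc]
    have := hx.2 y hy
    linarith

lemma maxFace_convexJoin {m : ℕ} {A B FA FB : Set (Fin m → ℝ)} (c : Fin m → ℝ)
    (hA : maxFace A c = FA) (hB : maxFace B c = FB)
    (hFA : FA.Nonempty) (hFB : FB.Nonempty)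
    (heq : ∀ a ∈ FA, ∀ b ∈ FB, dotp c a = dotp c b) :
    maxFace (convexJoin ℝ A B) c = convexJoin ℝ FA FB := by
  obtain ⟨a₀, ha₀⟩ := hFA
  obtain ⟨b₀, hb₀⟩ := hFB
  have ha₀' : a₀ ∈ maxFace A c := hA ▸ ha₀
  have hb₀' : b₀ ∈ maxFace B c := hB ▸ hb₀
  set M := dotp c a₀ with hMdef
  have hMb : dotp c b₀ = M := (heq a₀ ha₀ b₀ hb₀).symm
  have hAle : ∀ a ∈ A, dotp c a ≤ M := fun a ha => ha₀'.2 a ha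
  have hBle : ∀ b ∈ B, dotp c b ≤ M := fun b hb => hMb ▸ hb₀'.2 b hb
  have hjoinle : ∀ y ∈ convexJoin ℝ A B, dotp c y ≤ M := by
    rintro y hy
    rw [mem_convexJoin] at hy
    obtain ⟨a, ha, b, hb, ⟨p, q, hp, hq, hpq, rfl⟩⟩ := hy
    rw [dotp_combo]
    have hM1 : p * M + q * M = M := by rw [← add_mul, hpq, one_mul]
    have h1 := mul_le_mul_of_nonneg_left (hAle a ha) hp
    have h2 := mul_le_mul_of_nonneg_left (hBle b hb) hq
    linarith
  have hFAval : ∀ a ∈ FA, dotp c a = M := fun a ha => dotp_eq_on_maxFace (hA ▸ ha) ha₀'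
  have hFBval : ∀ b ∈ FB, dotp c b = M := fun b hb =>
    (dotp_eq_on_maxFace (hB ▸ hb) hb₀').trans hMb
  have hsubA : FA ⊆ A := hA ▸ maxFace_subset
  have hsubB : FB ⊆ B := hB ▸ maxFace_subset
  ext x
  constructor
  · rintro ⟨hxJ, hxmax⟩
    have hxM : dotp c x = M := by
      have h1 := hxmax a₀ ((subset_convexJoin_left (t := B) ⟨b₀, hsubB hb₀⟩) (hsubA ha₀))
      have h2 := hjoinle x hxJ
      linarith
    rw [mem_convexJoin] at hxJ
    obtain ⟨a, ha, b, hb, ⟨p, q, hp, hq, hpq, rfl⟩⟩ := hxJ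
    have hcombo : dotp c (p • a + q • b) = p * dotp c a + q * dotp c b := dotp_combo _ _ _ _ _
    have hterm : p * (M - dotp c a) + q * (M - dotp c b) = 0 := by
      rw [hcombo] at hxM
      have hM1 : p * M + q * M = M := by rw [← add_mul, hpq, one_mul]
      linarith
    have ht1 : 0 ≤ p * (M - dotp c a) := mul_nonneg hp (by linarith [hAle a ha])
    have ht2 : 0 ≤ q * (M - dotp c b) := mul_nonneg hq (by linarith [hBle b hb])
    have hz1 : p * (M - dotp c a) = 0 := by linarith
    have hz2 : q * (M - dotp c b) = 0 := by linarith
    rw [mem_convexJoin]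
    rcases eq_or_ne p 0 with hp0 | hp0
    · have hq1 : q = 1 := by rw [hp0] at hpq; linarith
      have hbM : dotp c b = M := by
        rcases mul_eq_zero.mp hz2 with h | h
        · exact absurd h (by rw [hq1]; norm_num)
        · linarith
      have hbFB : b ∈ FB := by
        rw [← hB]; exact ⟨hb, fun y hy => by rw [hbM]; exact hBle y hy⟩
      refine ⟨a₀, ha₀, b, hbFB, ⟨p, q, hp, hq, hpq, ?_⟩⟩
      rw [hp0]; simp
    · have haM : dotp c a = M := by
        rcases mul_eq_zero.mp hz1 with h | h
        · exact absurd h hp0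
        · linarith
      have haFA : a ∈ FA := by
        rw [← hA]; exact ⟨ha, fun y hy => by rw [haM]; exact hAle y hy⟩
      rcases eq_or_ne q 0 with hq0 | hq0
      · refine ⟨a, haFA, b₀, hb₀, ⟨p, q, hp, hq, hpq, ?_⟩⟩
        rw [hq0]; simp
      · have hbM : dotp c b = M := by
          rcases mul_eq_zero.mp hz2 with h | h
          · exact absurd h hq0
          · linarith
        have hbFB : b ∈ FB := by
          rw [← hB]; exact ⟨hb, fun y hy => by rw [hbM]; exact hBle y hy⟩
        exact ⟨a, haFA, b, hbFB, ⟨p, q, hp, hq, hpq, rfl⟩⟩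
  · intro hx
    rw [mem_convexJoin] at hx
    obtain ⟨a, ha, b, hb, ⟨p, q, hp, hq, hpq, rfl⟩⟩ := hx
    have hval : dotp c (p • a + q • b) = M := by
      rw [dotp_combo, hFAval a ha, hFBval b hb, ← add_mul, hpq, one_mul]
    refine ⟨?_, fun y hy => by rw [hval]; exact hjoinle y hy⟩
    rw [mem_convexJoin]
    exact ⟨a, hsubA ha, b, hsubB hb, ⟨p, q, hp, hq, hpq, rfl⟩⟩

end Cay
section Hull

variable {n : ℕ}

lemma isLinearMap_dotp (c : Fin n → ℝ) : IsLinearMap ℝ (fun x => dotp c x) :=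
  ⟨fun x y => (dlin c).map_add x y, fun l x => (dlin c).map_smul l x⟩

lemma maxFace_convexHull_finset (S : Finset (Fin n → ℝ)) (hS : S.Nonempty) (c : Fin n → ℝ) :
    maxFace (convexHull ℝ (↑S : Set (Fin n → ℝ))) c
      = convexHull ℝ (maxFace (↑S : Set (Fin n → ℝ)) c) := by
  classical
  obtain ⟨s₀, hs₀S, hs₀max⟩ := S.exists_max_image (fun s => dotp c s) hS
  set M := dotp c s₀ with hMdef
  have hs₀T : s₀ ∈ maxFace (↑S : Set (Fin n → ℝ)) c := ⟨hs₀S, fun y hy => hs₀max y hy⟩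
  have hhullle : ∀ y ∈ convexHull ℝ (↑S : Set (Fin n → ℝ)), dotp c y ≤ M := by
    intro y hy
    have : convexHull ℝ (↑S : Set (Fin n → ℝ)) ⊆ {w | dotp c w ≤ M} :=
      convexHull_min (fun s hs => hs₀max s hs) (convex_halfSpace_le (isLinearMap_dotp c) M)
    exact this hy
  apply Set.Subset.antisymm
  · rintro x ⟨hxhull, hxmax⟩
    have hxM : dotp c x = M := by
      have h1 := hxmax s₀ (subset_convexHull ℝ _ hs₀S)
      have h2 := hhullle x hxhull
      linarith
    rw [Finset.convexHull_eq] at hxhull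
    obtain ⟨w, hw0, hw1, hwx⟩ := hxhull
    have hxsum : x = ∑ y ∈ S, w y • y := by
      rw [← hwx, Finset.centerMass_eq_of_sum_1 _ _ hw1]; simp
    have hdx : dotp c x = ∑ y ∈ S, w y * dotp c y := by
      rw [hxsum, ← dlin_apply, map_sum]
      simp [smul_eq_mul]
    have hzero : ∑ y ∈ S, w y * (M - dotp c y) = 0 := by
      have : ∑ y ∈ S, w y * (M - dotp c y)
          = (∑ y ∈ S, w y) * M - ∑ y ∈ S, w y * dotp c y := by
        rw [Finset.sum_mul, ← Finset.sum_sub_distrib]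
        congr 1; ext y; ring
      rw [this, hw1, one_mul, ← hdx, hxM, sub_self]
    have hallz : ∀ y ∈ S, w y * (M - dotp c y) = 0 :=
      (Finset.sum_eq_zero_iff_of_nonneg
        (fun y hy => mul_nonneg (hw0 y hy) (by linarith [hs₀max y hy]))).mp hzero
    have hxcm : ({y ∈ S | w y ≠ 0} : Finset _).centerMass w id = x := by
      rw [Finset.centerMass_filter_ne_zero]; exact hwx
    rw [← hxcm]
    refine Finset.centerMass_mem_convexHull _ (fun y hy => hw0 y (Finset.mem_filter.mp hy).1)
      ?_ (fun y hy => ?_)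
    · have : ∑ y ∈ ({y ∈ S | w y ≠ 0} : Finset _), w y = 1 := by
        rw [Finset.sum_filter_ne_zero, hw1]
      rw [this]; norm_num
    · obtain ⟨hyS, hwy⟩ := Finset.mem_filter.mp hy
      have hyM : dotp c y = M := by
        rcases mul_eq_zero.mp (hallz y hyS) with h | h
        · exact absurd h hwy
        · linarith
      exact ⟨hyS, fun z hz => by simp only [id_eq]; rw [hyM]; exact hs₀max z hz⟩
  · intro x hx
    have hsub : maxFace (↑S : Set (Fin n → ℝ)) c ⊆ (↑S : Set (Fin n → ℝ)) := maxFace_subset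
    refine ⟨convexHull_mono hsub hx, fun y hy => ?_⟩
    have hxM : dotp c x = M := by
      have : convexHull ℝ (maxFace (↑S : Set (Fin n → ℝ)) c) ⊆ {w | dotp c w = M} :=
        convexHull_min (fun s hs => dotp_eq_on_maxFace hs hs₀T)
          (convex_hyperplane (isLinearMap_dotp c) M)
      exact this hx
    rw [hxM]
    exact hhullle y hy

lemma maxFace_finset_perturb (S : Finset (Fin n → ℝ)) (hS : S.Nonempty) (c w : Fin n → ℝ)
    (hconst : ∀ x ∈ maxFace (↑S : Set (Fin n → ℝ)) c,
        ∀ y ∈ maxFace (↑S : Set (Fin n → ℝ)) c, dotp w x = dotp w y) :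
    ∃ ε : ℝ, 0 < ε ∧ ∀ ε' : ℝ, 0 < ε' → ε' ≤ ε →
      maxFace (↑S : Set (Fin n → ℝ)) (c + ε' • w) = maxFace (↑S : Set (Fin n → ℝ)) c := by
  classical
  obtain ⟨s₀, hs₀S, hs₀max⟩ := S.exists_max_image (fun s => dotp c s) hS
  set M := dotp c s₀ with hMdef
  set κ := dotp w s₀ with hκdef
  have hs₀T : s₀ ∈ maxFace (↑S : Set (Fin n → ℝ)) c := ⟨hs₀S, fun y hy => hs₀max y hy⟩
  have hmemT : ∀ s ∈ S, dotp c s = M → s ∈ maxFace (↑S : Set (Fin n → ℝ)) c :=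
    fun s hs h => ⟨hs, fun y hy => by rw [h]; exact hs₀max y hy⟩
  have hTval : ∀ s ∈ S, dotp c s = M → dotp w s = κ :=
    fun s hs h => hconst s (hmemT s hs h) s₀ hs₀T
  set Bad := ({s ∈ S | dotp c s < M} : Finset _) with hBad
  set g : (Fin n → ℝ) → ℝ := fun s => (M - dotp c s) / (|dotp w s - κ| + 1) with hg
  set ε : ℝ := if h : Bad.Nonempty then min 1 (Bad.inf' h g) else 1 with hε
  have hεpos : 0 < ε := by
    rw [hε]
    split_ifs with h
    · refine lt_min one_pos ?_
      rw [Finset.lt_inf'_iff]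
      intro s hs
      obtain ⟨hsS, hslt⟩ := Finset.mem_filter.mp hs
      exact div_pos (by linarith) (by positivity)
    · exact one_pos
  refine ⟨ε, hεpos, fun ε' hε'pos hε'le => ?_⟩
  have hkey : ∀ s ∈ S, dotp c s < M → dotp c s + ε' * dotp w s < M + ε' * κ := by
    intro s hsS hslt
    have hsBad : s ∈ Bad := Finset.mem_filter.mpr ⟨hsS, hslt⟩
    have hBadne : Bad.Nonempty := ⟨s, hsBad⟩
    have hεle : ε ≤ g s := by
      rw [hε, dif_pos hBadne]
      exact le_trans (min_le_right _ _) (Finset.inf'_le g hsBad)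
    have hgle : ε' ≤ g s := le_trans hε'le hεle
    have habs : ε' * (dotp w s - κ) ≤ ε' * |dotp w s - κ| :=
      mul_le_mul_of_nonneg_left (le_abs_self _) (le_of_lt hε'pos)
    have h2 : ε' * |dotp w s - κ| < M - dotp c s := by
      have hd : (0:ℝ) < |dotp w s - κ| + 1 := by positivity
      have hgs : g s = (M - dotp c s) / (|dotp w s - κ| + 1) := rfl
      rw [hgs] at hgle
      have h3 := (le_div_iff₀ hd).mp hgle
      have hexp : ε' * (|dotp w s - κ| + 1) = ε' * |dotp w s - κ| + ε' := by ring
      linarith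
    nlinarith [habs, h2]
  have hval : ∀ s : Fin n → ℝ, dotp (c + ε' • w) s = dotp c s + ε' * dotp w s := by
    intro s; rw [dotp_add_left, dotp_smul_left]
  ext x
  constructor
  · rintro ⟨hxS, hxmax⟩
    have hxSf : x ∈ S := hxS
    by_contra hxT
    have hxlt : dotp c x < M := by
      rcases lt_or_eq_of_le (hs₀max x hxSf) with h | h
      · exact h
      · exact absurd (hmemT x hxSf h) hxT
    have h1 := hxmax s₀ (by exact_mod_cast hs₀S)
    rw [hval, hval] at h1
    have h2 := hkey x hxSf hxlt
    rw [hTval s₀ hs₀S rfl] at h1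
    linarith
  · intro hxT
    have hxS := hxT.1
    have hxM : dotp c x = M := dotp_eq_on_maxFace hxT hs₀T
    have hxκ : dotp w x = κ := hTval x hxS hxM
    refine ⟨hxS, fun y hy => ?_⟩
    have hyS : y ∈ S := hy
    rw [hval, hval, hxM, hxκ]
    rcases lt_or_eq_of_le (hs₀max y hyS) with h | h
    · exact le_of_lt (hkey y hyS h)
    · rw [h, hTval y hyS h]

end Hull
section Span

variable {n d : ℕ}

lemma vectorSpan_convexHull' (s : Set (Fin n → ℝ)) :
    vectorSpan ℝ (convexHull ℝ s) = vectorSpan ℝ s := by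
  rw [← direction_affineSpan, affineSpan_convexHull, direction_affineSpan]

lemma vectorSpan_le_ker {P F : Set (Fin n → ℝ)} {c : Fin n → ℝ} (h : maxFace P c = F) :
    vectorSpan ℝ F ≤ LinearMap.ker (dlin c) := by
  rw [vectorSpan_def, Submodule.span_le]
  rintro v ⟨x, hx, y, hy, rfl⟩
  rw [SetLike.mem_coe, LinearMap.mem_ker]
  have hx' : x ∈ maxFace P c := h ▸ hx
  have hy' : y ∈ maxFace P c := h ▸ hy
  have : dlin c (x -ᵥ y) = dotp c x - dotp c y := by
    rw [vsub_eq_sub]; exact (dlin c).map_sub x y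
  rw [this, dotp_eq_on_maxFace hx' hy', sub_self]

/-- The linear embedding `x ↦ Fin.snoc x 0`. -/
def sn0 : (Fin d → ℝ) →ₗ[ℝ] (Fin (d + 1) → ℝ) where
  toFun x := Fin.snoc x 0
  map_add' x y := by
    funext i
    cases i using Fin.lastCases with
    | last => simp
    | cast i => simp
  map_smul' l x := by
    funext i
    cases i using Fin.lastCases with
    | last => simp
    | cast i => simp

@[simp] lemma sn0_apply (x : Fin d → ℝ) : (sn0 x : Fin (d+1) → ℝ) = Fin.snoc x 0 := rfl

lemma sn0_last (x : Fin d → ℝ) : (sn0 x) (Fin.last d) = 0 := by simp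

lemma sn0_inj : Function.Injective (sn0 (d := d)) := by
  intro x y h
  have := congrArg Fin.init h
  simpa [Fin.init_snoc] using this

lemma sdim_cayley {F0 F1 : Set (Fin d → ℝ)} (h0 : F0.Nonempty) (h1 : F1.Nonempty) :
    sdim (convexHull ℝ (cay 0 F0 ∪ cay 1 F1)) =
      Module.finrank ℝ ↥(vectorSpan ℝ F0 ⊔ vectorSpan ℝ F1) + 1 := by
  obtain ⟨p0, hp0⟩ := h0
  obtain ⟨p1, hp1⟩ := h1
  set q0 : Fin (d+1) → ℝ := Fin.snoc p0 0 with hq0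
  set v : Fin (d+1) → ℝ := Fin.snoc (p1 - p0) 1 with hv
  have hq0mem : q0 ∈ cay 0 F0 ∪ cay 1 F1 := Or.inl ⟨p0, hp0, rfl⟩
  have hA : (· -ᵥ q0) '' (cay 0 F0) = sn0 '' ((· -ᵥ p0) '' F0) := by
    ext z
    constructor
    · rintro ⟨_, ⟨x, hx, rfl⟩, rfl⟩
      refine ⟨x - p0, ⟨x, hx, rfl⟩, ?_⟩
      funext i
      cases i using Fin.lastCases with
      | last => simp [hq0]
      | cast i => simp [hq0]
    · rintro ⟨_, ⟨x, hx, rfl⟩, rfl⟩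
      refine ⟨Fin.snoc x 0, ⟨x, hx, rfl⟩, ?_⟩
      funext i
      cases i using Fin.lastCases with
      | last => simp [hq0]
      | cast i => simp [hq0]
  have hB : (· -ᵥ q0) '' (cay 1 F1) = (fun y => sn0 y + v) '' ((· -ᵥ p1) '' F1) := by
    ext z
    constructor
    · rintro ⟨_, ⟨x, hx, rfl⟩, rfl⟩
      refine ⟨x - p1, ⟨x, hx, rfl⟩, ?_⟩
      funext i
      cases i using Fin.lastCases with
      | last => simp [hq0, hv]
      | cast i => simp [hq0, hv]
    · rintro ⟨_, ⟨x, hx, rfl⟩, rfl⟩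
      refine ⟨Fin.snoc x 1, ⟨x, hx, rfl⟩, ?_⟩
      funext i
      cases i using Fin.lastCases with
      | last => simp [hq0, hv]
      | cast i => simp [hq0, hv]
  have hspanB : Submodule.span ℝ ((· -ᵥ q0) '' (cay 1 F1))
      = (vectorSpan ℝ F1).map sn0 ⊔ Submodule.span ℝ {v} := by
    rw [hB]
    apply le_antisymm
    · rw [Submodule.span_le]
      rintro _ ⟨y, hy, rfl⟩
      have hy' : sn0 y ∈ (vectorSpan ℝ F1).map sn0 := by
        refine ⟨y, ?_, rfl⟩
        rw [vectorSpan_eq_span_vsub_set_right ℝ hp1]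
        exact Submodule.subset_span hy
      exact Submodule.add_mem _ (Submodule.mem_sup_left hy')
        (Submodule.mem_sup_right (Submodule.subset_span rfl))
    · have hvmem : v ∈ Submodule.span ℝ ((fun y => sn0 y + v) '' ((· -ᵥ p1) '' F1)) := by
        apply Submodule.subset_span
        refine ⟨p1 -ᵥ p1, ⟨p1, hp1, rfl⟩, ?_⟩
        rw [vsub_self]
        show sn0 0 + v = v
        rw [map_zero, zero_add]
      refine sup_le ?_ ?_
      · rw [Submodule.map_le_iff_le_comap, vectorSpan_eq_span_vsub_set_right ℝ hp1,
          Submodule.span_le]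
        rintro y hy
        rw [SetLike.mem_coe, Submodule.mem_comap]
        have h1 : sn0 y + v ∈ Submodule.span ℝ ((fun y => sn0 y + v) '' ((· -ᵥ p1) '' F1)) :=
          Submodule.subset_span ⟨y, hy, rfl⟩
        have := Submodule.sub_mem _ h1 hvmem
        simpa using this
      · rw [Submodule.span_le, Set.singleton_subset_iff]
        exact hvmem
  have hvs : vectorSpan ℝ (convexHull ℝ (cay 0 F0 ∪ cay 1 F1))
      = (vectorSpan ℝ F0 ⊔ vectorSpan ℝ F1).map sn0 ⊔ Submodule.span ℝ {v} := by
    rw [vectorSpan_convexHull', vectorSpan_eq_span_vsub_set_right ℝ hq0mem,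
      Set.image_union, Submodule.span_union, hA, hspanB,
      Submodule.span_image, ← vectorSpan_eq_span_vsub_set_right ℝ hp0,
      Submodule.map_sup, sup_assoc]
  rw [sdim, hvs]
  set W := (vectorSpan ℝ F0 ⊔ vectorSpan ℝ F1).map sn0 with hW
  have hWlast : ∀ x ∈ W, x (Fin.last d) = 0 := by
    rintro _ ⟨y, _, rfl⟩; simp
  have hvlast : v (Fin.last d) = 1 := by simp [hv]
  have hvne : v ≠ 0 := by
    intro h; rw [h] at hvlast; simp at hvlast
  have hinf : W ⊓ Submodule.span ℝ {v} = ⊥ := by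
    rw [eq_bot_iff]
    intro x hx
    rw [Submodule.mem_inf] at hx
    obtain ⟨hxW, hxv⟩ := hx
    rw [Submodule.mem_span_singleton] at hxv
    obtain ⟨l, rfl⟩ := hxv
    have := hWlast _ hxW
    rw [Pi.smul_apply, hvlast, smul_eq_mul, mul_one] at this
    subst this
    simp
  have := Submodule.finrank_sup_add_finrank_inf_eq W (Submodule.span ℝ {v})
  rw [hinf, finrank_bot, add_zero, finrank_span_singleton hvne] at this
  rw [this]
  congr 1
  exact (Submodule.equivMapOfInjective sn0 sn0_inj _).symm.finrank_eq

end Span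
section Euc

variable {n : ℕ}

/-- Identity linear equivalence to Euclidean space. -/
def toE : (Fin n → ℝ) ≃ₗ[ℝ] EuclideanSpace ℝ (Fin n) :=
  (WithLp.linearEquiv 2 ℝ (Fin n → ℝ)).symm

lemma toE_apply (x : Fin n → ℝ) (i : Fin n) : (toE x) i = x i := rfl

lemma inner_toE (x y : Fin n → ℝ) :
    (inner ℝ (toE x) (toE y) : ℝ) = dotp x y := by
  rw [PiLp.inner_apply]
  simp [toE_apply, dotp, mul_comm]

lemma dotp_comm (x y : Fin n → ℝ) : dotp x y = dotp y x := by
  simp [dotp, mul_comm]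

lemma mem_perp_iff {W : Submodule ℝ (Fin n → ℝ)} {c : Fin n → ℝ} :
    toE c ∈ (W.map (toE (n := n)).toLinearMap)ᗮ
      ↔ ∀ x ∈ W, dotp c x = 0 := by
  rw [Submodule.mem_orthogonal]
  constructor
  · intro h x hx
    have := h (toE x) ⟨x, hx, rfl⟩
    rw [inner_toE, dotp_comm] at this
    exact this
  · rintro h _ ⟨x, hx, rfl⟩
    show (inner ℝ (toE x) (toE c) : ℝ) = 0
    rw [inner_toE, dotp_comm]
    exact h x hx

lemma finrank_perp (W : Submodule ℝ (Fin n → ℝ)) :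
    Module.finrank ℝ ↥((W.map (toE (n := n)).toLinearMap)ᗮ)
      + Module.finrank ℝ ↥W = n := by
  have h1 := Submodule.finrank_add_finrank_orthogonal
    (W.map (toE (n := n)).toLinearMap)
  have h2 : Module.finrank ℝ
      ↥(W.map (toE (n := n)).toLinearMap) = Module.finrank ℝ ↥W :=
    LinearEquiv.finrank_map_eq toE W
  rw [h2] at h1
  rw [add_comm] at h1
  rw [h1, finrank_euclideanSpace_fin]

end Euc
/-- Facets of the Cayley embedding: the Cayley embedding `F` of faces `F0`, `F1` is a
facet (a `d`-dimensional face) of the `(d+1)`-dimensional Cayley embedding `P` iff the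
intersection of the optimality cones of `F0` and `F1` is a ray spanned by some
nonzero `r`. -/
theorem cayley_facet_iff (d : ℕ)
    (P0 P1 : Set (Fin d → ℝ)) (h0 : IsPolytope P0) (h1 : IsPolytope P1)
    (hne0 : P0.Nonempty) (hne1 : P1.Nonempty)
    (hd0 : sdim P0 = d) (hd1 : sdim P1 = d)
    (F0 F1 : Set (Fin d → ℝ))
    (hF0 : IsFaceOf P0 F0) (hF1 : IsFaceOf P1 F1)
    (hF0ne : F0.Nonempty) (hF1ne : F1.Nonempty)
    (P : Set (Fin (d + 1) → ℝ)) (hP : P = convexHull ℝ (cay 0 P0 ∪ cay 1 P1))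
    (F : Set (Fin (d + 1) → ℝ)) (hF : F = convexHull ℝ (cay 0 F0 ∪ cay 1 F1)) :
    (IsFaceOf P F ∧ sdim F = d) ↔
      ∃ r : Fin d → ℝ, r ≠ 0 ∧
        optCone P0 F0 ∩ optCone P1 F1 = {c | ∃ l : ℝ, 0 < l ∧ c = l • r} := by
  classical
  obtain ⟨S0, hS0⟩ := h0
  obtain ⟨S1, hS1⟩ := h1
  have hS0ne : S0.Nonempty := by
    rw [← Finset.coe_nonempty, ← convexHull_nonempty_iff (𝕜 := ℝ), ← hS0]; exact hne0
  have hS1ne : S1.Nonempty := by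
    rw [← Finset.coe_nonempty, ← convexHull_nonempty_iff (𝕜 := ℝ), ← hS1]; exact hne1
  have hP0conv : Convex ℝ P0 := hS0 ▸ convex_convexHull ℝ _
  have hP1conv : Convex ℝ P1 := hS1 ▸ convex_convexHull ℝ _
  obtain ⟨c0, hc0⟩ := hF0
  obtain ⟨c1, hc1⟩ := hF1
  have hF0conv : Convex ℝ F0 := hc0 ▸ convex_maxFace hP0conv c0
  have hF1conv : Convex ℝ F1 := hc1 ▸ convex_maxFace hP1conv c1
  have hF0sub : F0 ⊆ P0 := hc0 ▸ maxFace_subset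
  have hF1sub : F1 ⊆ P1 := hc1 ▸ maxFace_subset
  obtain ⟨x0, hx0⟩ := hF0ne
  obtain ⟨x1, hx1⟩ := hF1ne
  set L0 := vectorSpan ℝ F0 with hL0
  set L1 := vectorSpan ℝ F1 with hL1
  have hPjoin : P = convexJoin ℝ (cay 0 P0) (cay 1 P1) := by
    rw [hP, (convex_cay hP0conv 0).convexHull_union (convex_cay hP1conv 1)
      (cay_nonempty hne0 0) (cay_nonempty hne1 1)]
  have hFjoin : F = convexJoin ℝ (cay 0 F0) (cay 1 F1) := by
    rw [hF, (convex_cay hF0conv 0).convexHull_union (convex_cay hF1conv 1)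
      (cay_nonempty ⟨x0, hx0⟩ 0) (cay_nonempty ⟨x1, hx1⟩ 1)]
  have hsdimF : sdim F = Module.finrank ℝ ↥(L0 ⊔ L1) + 1 := by
    rw [hF]; exact sdim_cayley ⟨x0, hx0⟩ ⟨x1, hx1⟩
  have hL0top : F0 = P0 → d ≤ Module.finrank ℝ ↥(L0 ⊔ L1) := by
    intro hEq
    have h1 : Module.finrank ℝ ↥L0 = d := by
      rw [hL0, hEq]; exact hd0
    calc d = Module.finrank ℝ ↥L0 := h1.symm
      _ ≤ Module.finrank ℝ ↥(L0 ⊔ L1) := Submodule.finrank_mono le_sup_left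
  have hface_of : ∀ c : Fin d → ℝ, maxFace P0 c = F0 → maxFace P1 c = F1 →
      F = maxFace P (Fin.snoc c (dotp c x0 - dotp c x1)) := by
    intro c h0c h1c
    have hA : maxFace (cay 0 P0) (Fin.snoc c (dotp c x0 - dotp c x1)) = cay 0 F0 := by
      rw [maxFace_cay, h0c]
    have hB : maxFace (cay 1 P1) (Fin.snoc c (dotp c x0 - dotp c x1)) = cay 1 F1 := by
      rw [maxFace_cay, h1c]
    have heq : ∀ a ∈ cay 0 F0, ∀ b ∈ cay 1 F1,
        dotp (Fin.snoc c (dotp c x0 - dotp c x1)) a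
          = dotp (Fin.snoc c (dotp c x0 - dotp c x1)) b := by
      rintro _ ⟨a, ha, rfl⟩ _ ⟨b, hb, rfl⟩
      rw [dotp_snoc, dotp_snoc]
      have h1 : dotp c a = dotp c x0 :=
        dotp_eq_on_maxFace (h0c ▸ ha : a ∈ maxFace P0 c) (h0c ▸ hx0)
      have h2 : dotp c b = dotp c x1 :=
        dotp_eq_on_maxFace (h1c ▸ hb : b ∈ maxFace P1 c) (h1c ▸ hx1)
      rw [h1, h2]; ring
    rw [hPjoin, maxFace_convexJoin _ hA hB (cay_nonempty ⟨x0, hx0⟩ 0)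
      (cay_nonempty ⟨x1, hx1⟩ 1) heq, ← hFjoin]
  have hperp_of : ∀ cc : Fin d → ℝ, maxFace P0 cc = F0 → maxFace P1 cc = F1 →
      ∀ x ∈ L0 ⊔ L1, dotp cc x = 0 := by
    intro cc hh0 hh1 x hx
    have hsup : L0 ⊔ L1 ≤ LinearMap.ker (dlin cc) :=
      sup_le (vectorSpan_le_ker hh0) (vectorSpan_le_ker hh1)
    have := hsup hx
    rwa [LinearMap.mem_ker, dlin_apply] at this
  have hperturb : ∀ c w : Fin d → ℝ, maxFace P0 c = F0 → maxFace P1 c = F1 →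
      (∀ x ∈ L0 ⊔ L1, dotp w x = 0) →
      ∃ ε : ℝ, 0 < ε ∧ maxFace P0 (c + ε • w) = F0 ∧ maxFace P1 (c + ε • w) = F1 := by
    intro c w h0c h1c hw
    have hwL0 : ∀ x ∈ L0, dotp w x = 0 := fun x hx => hw x (Submodule.mem_sup_left hx)
    have hwL1 : ∀ x ∈ L1, dotp w x = 0 := fun x hx => hw x (Submodule.mem_sup_right hx)
    have hconst0 : ∀ x ∈ maxFace (↑S0 : Set (Fin d → ℝ)) c,
        ∀ y ∈ maxFace (↑S0 : Set (Fin d → ℝ)) c, dotp w x = dotp w y := by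
      intro x hx y hy
      have hxF : x ∈ F0 := by
        rw [← h0c, hS0, maxFace_convexHull_finset S0 hS0ne]
        exact subset_convexHull ℝ _ hx
      have hyF : y ∈ F0 := by
        rw [← h0c, hS0, maxFace_convexHull_finset S0 hS0ne]
        exact subset_convexHull ℝ _ hy
      have h1 := hwL0 (x -ᵥ y) (vsub_mem_vectorSpan ℝ hxF hyF)
      rw [vsub_eq_sub, dotp_sub_right] at h1
      linarith
    have hconst1 : ∀ x ∈ maxFace (↑S1 : Set (Fin d → ℝ)) c,
        ∀ y ∈ maxFace (↑S1 : Set (Fin d → ℝ)) c, dotp w x = dotp w y := by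
      intro x hx y hy
      have hxF : x ∈ F1 := by
        rw [← h1c, hS1, maxFace_convexHull_finset S1 hS1ne]
        exact subset_convexHull ℝ _ hx
      have hyF : y ∈ F1 := by
        rw [← h1c, hS1, maxFace_convexHull_finset S1 hS1ne]
        exact subset_convexHull ℝ _ hy
      have h1 := hwL1 (x -ᵥ y) (vsub_mem_vectorSpan ℝ hxF hyF)
      rw [vsub_eq_sub, dotp_sub_right] at h1
      linarith
    obtain ⟨ε0, hε0, hP0'⟩ := maxFace_finset_perturb S0 hS0ne c w hconst0
    obtain ⟨ε1, hε1, hP1'⟩ := maxFace_finset_perturb S1 hS1ne c w hconst1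
    have hεpos : 0 < min ε0 ε1 := lt_min hε0 hε1
    refine ⟨min ε0 ε1, hεpos, ?_, ?_⟩
    · rw [hS0, maxFace_convexHull_finset S0 hS0ne, hP0' _ hεpos (min_le_left _ _),
        ← maxFace_convexHull_finset S0 hS0ne, ← hS0, h0c]
    · rw [hS1, maxFace_convexHull_finset S1 hS1ne, hP1' _ hεpos (min_le_right _ _),
        ← maxFace_convexHull_finset S1 hS1ne, ← hS1, h1c]
  constructor
  · rintro ⟨⟨c', hc'⟩, hdim⟩
    set c : Fin d → ℝ := Fin.init c' with hcdef
    set γ : ℝ := c' (Fin.last d) with hγdef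
    have hc'snoc : c' = Fin.snoc c γ := (Fin.snoc_init_self c').symm
    have hcay0P : ∀ x ∈ P0, Fin.snoc x (0:ℝ) ∈ P := by
      intro x hx; rw [hP]; exact subset_convexHull ℝ _ (Or.inl ⟨x, hx, rfl⟩)
    have hcay1P : ∀ x ∈ P1, Fin.snoc x (1:ℝ) ∈ P := by
      intro x hx; rw [hP]; exact subset_convexHull ℝ _ (Or.inr ⟨x, hx, rfl⟩)
    have hcay0F : ∀ x ∈ F0, Fin.snoc x (0:ℝ) ∈ maxFace P c' := by
      intro x hx; rw [← hc', hF]; exact subset_convexHull ℝ _ (Or.inl ⟨x, hx, rfl⟩)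
    have hcay1F : ∀ x ∈ F1, Fin.snoc x (1:ℝ) ∈ maxFace P c' := by
      intro x hx; rw [← hc', hF]; exact subset_convexHull ℝ _ (Or.inr ⟨x, hx, rfl⟩)
    have hz0 := hcay0F x0 hx0
    have hz1 := hcay1F x1 hx1
    have hF0max : F0 ⊆ maxFace P0 c := by
      intro x hx
      refine ⟨hF0sub hx, fun y hy => ?_⟩
      have h1 := (hcay0F x hx).2 (Fin.snoc y (0:ℝ)) (hcay0P y hy)
      rw [hc'snoc, dotp_snoc, dotp_snoc] at h1
      linarith
    have hF1max : F1 ⊆ maxFace P1 c := by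
      intro x hx
      refine ⟨hF1sub hx, fun y hy => ?_⟩
      have h1 := (hcay1F x hx).2 (Fin.snoc y (1:ℝ)) (hcay1P y hy)
      rw [hc'snoc, dotp_snoc, dotp_snoc] at h1
      linarith
    have h0c : maxFace P0 c = F0 := by
      apply Set.Subset.antisymm _ hF0max
      intro x hx
      have hxP : Fin.snoc x (0:ℝ) ∈ maxFace P c' := by
        refine ⟨hcay0P x hx.1, fun y hy => ?_⟩
        calc dotp c' y ≤ dotp c' (Fin.snoc x0 (0:ℝ)) := hz0.2 y hy
          _ = dotp c' (Fin.snoc x (0:ℝ)) := by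
              rw [hc'snoc, dotp_snoc, dotp_snoc,
                dotp_eq_on_maxFace hx (hF0max hx0)]
      rw [← hc', hFjoin, mem_convexJoin] at hxP
      obtain ⟨_, ⟨a', ha', rfl⟩, _, ⟨b', hb', rfl⟩, p, q, hp, hq, hpq, hcomb⟩ := hxP
      have hlast := congrFun hcomb (Fin.last d)
      simp only [Pi.add_apply, Pi.smul_apply, Fin.snoc_last, smul_eq_mul,
        mul_zero, mul_one, zero_add] at hlast
      have hq0 : q = 0 := hlast
      have hp1 : p = 1 := by rw [hq0] at hpq; linarith
      have hxa : (Fin.snoc x (0:ℝ) : Fin (d+1) → ℝ) = Fin.snoc a' (0:ℝ) := by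
        rw [← hcomb, hq0, hp1]; simp
      have : x = a' := by
        have h2 := congrArg Fin.init hxa
        simpa [Fin.init_snoc] using h2
      rw [this]; exact ha'
    have h1c : maxFace P1 c = F1 := by
      apply Set.Subset.antisymm _ hF1max
      intro x hx
      have hxP : Fin.snoc x (1:ℝ) ∈ maxFace P c' := by
        refine ⟨hcay1P x hx.1, fun y hy => ?_⟩
        calc dotp c' y ≤ dotp c' (Fin.snoc x1 (1:ℝ)) := hz1.2 y hy
          _ = dotp c' (Fin.snoc x (1:ℝ)) := by
              rw [hc'snoc, dotp_snoc, dotp_snoc,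
                dotp_eq_on_maxFace hx (hF1max hx1)]
      rw [← hc', hFjoin, mem_convexJoin] at hxP
      obtain ⟨_, ⟨a', ha', rfl⟩, _, ⟨b', hb', rfl⟩, p, q, hp, hq, hpq, hcomb⟩ := hxP
      have hlast := congrFun hcomb (Fin.last d)
      simp only [Pi.add_apply, Pi.smul_apply, Fin.snoc_last, smul_eq_mul,
        mul_zero, mul_one, zero_add, add_zero] at hlast
      have hq1 : q = 1 := hlast
      have hp0 : p = 0 := by rw [hq1] at hpq; linarith
      have hxb : (Fin.snoc x (1:ℝ) : Fin (d+1) → ℝ) = Fin.snoc b' (1:ℝ) := by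
        rw [← hcomb, hq1, hp0]; simp
      have : x = b' := by
        have h2 := congrArg Fin.init hxb
        simpa [Fin.init_snoc] using h2
      rw [this]; exact hb'
    have hrank : Module.finrank ℝ ↥(L0 ⊔ L1) + 1 = d := by rw [← hsdimF, hdim]
    have hcne : c ≠ 0 := by
      intro h
      rw [h, maxFace_zero] at h0c
      have := hL0top h0c.symm
      omega
    refine ⟨c, hcne, ?_⟩
    ext c''
    simp only [Set.mem_inter_iff, Set.mem_setOf_eq]
    constructor
    · rintro ⟨h0'', h1''⟩
      have h0e : maxFace P0 c'' = F0 := h0''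
      have h1e : maxFace P1 c'' = F1 := h1''
      have hcN : toE c ∈ ((L0 ⊔ L1).map (toE (n := d)).toLinearMap)ᗮ :=
        mem_perp_iff.mpr (hperp_of c h0c h1c)
      have hc''N : toE c'' ∈ ((L0 ⊔ L1).map (toE (n := d)).toLinearMap)ᗮ :=
        mem_perp_iff.mpr (hperp_of c'' h0e h1e)
      have hNrank : Module.finrank ℝ ↥(((L0 ⊔ L1).map (toE (n := d)).toLinearMap)ᗮ) = 1 := by
        have := finrank_perp (L0 ⊔ L1)
        omega
      have htEcne : toE c ≠ 0 := by
        intro h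
        apply hcne
        have := congrArg (toE (n := d)).symm h
        simpa using this
      have hspan : Submodule.span ℝ {toE c} = ((L0 ⊔ L1).map (toE (n := d)).toLinearMap)ᗮ := by
        apply Submodule.eq_of_le_of_finrank_eq
        · rw [Submodule.span_le, Set.singleton_subset_iff]; exact hcN
        · rw [finrank_span_singleton htEcne, hNrank]
      have hmem : toE c'' ∈ Submodule.span ℝ {toE c} := hspan ▸ hc''N
      rw [Submodule.mem_span_singleton] at hmem
      obtain ⟨l, hl⟩ := hmem
      have hc''l : c'' = l • c := by
        have h2 := congrArg (toE (n := d)).symm hl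
        rw [map_smul] at h2
        simpa using h2.symm
      rcases lt_trichotomy l 0 with hneg | hzero | hpos
      · exfalso
        have hconstP0 : ∀ y ∈ P0, dotp c y = dotp c x0 := by
          intro y hy
          have hx0c : x0 ∈ maxFace P0 c := h0c.symm ▸ hx0
          have hx0c'' : x0 ∈ maxFace P0 c'' := h0e.symm ▸ hx0
          have h1 := hx0c.2 y hy
          have h2 := hx0c''.2 y hy
          rw [hc''l, dotp_smul_left, dotp_smul_left] at h2
          have h3 : dotp c x0 ≤ dotp c y := by nlinarith
          linarith
        have hsub2 : P0 ⊆ maxFace P0 c := fun y hy =>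
          ⟨hy, fun z hz => by rw [hconstP0 y hy, ← hconstP0 z hz]⟩
        have hP0F0 : F0 = P0 := by
          rw [← h0c]
          exact Set.Subset.antisymm maxFace_subset hsub2
        have := hL0top hP0F0
        omega
      · exfalso
        rw [hzero, zero_smul] at hc''l
        rw [hc''l, maxFace_zero] at h0e
        have := hL0top h0e.symm
        omega
      · exact ⟨l, hpos, hc''l⟩
    · rintro ⟨l, hl, rfl⟩
      constructor
      · show maxFace P0 (l • c) = F0
        rw [maxFace_smul hl]; exact h0c
      · show maxFace P1 (l • c) = F1
        rw [maxFace_smul hl]; exact h1c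
  · rintro ⟨r, hrne, hray⟩
    have hrmem : r ∈ optCone P0 F0 ∩ optCone P1 F1 := by
      rw [hray]; exact ⟨1, one_pos, (one_smul ℝ r).symm⟩
    have h0r : maxFace P0 r = F0 := hrmem.1
    have h1r : maxFace P1 r = F1 := hrmem.2
    refine ⟨⟨Fin.snoc r (dotp r x0 - dotp r x1), hface_of r h0r h1r⟩, ?_⟩
    rw [hsdimF]
    have htErne : toE r ≠ 0 := by
      intro h
      apply hrne
      have := congrArg (toE (n := d)).symm h
      simpa using this
    have hrN : toE r ∈ ((L0 ⊔ L1).map (toE (n := d)).toLinearMap)ᗮ :=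
      mem_perp_iff.mpr (hperp_of r h0r h1r)
    have hNle : ((L0 ⊔ L1).map (toE (n := d)).toLinearMap)ᗮ ≤ Submodule.span ℝ {toE r} := by
      intro ν hν
      have hνw : toE (toE.symm ν) = ν := by simp
      have hwperp : ∀ x ∈ L0 ⊔ L1, dotp (toE.symm ν) x = 0 :=
        mem_perp_iff.mp (hνw ▸ hν)
      obtain ⟨ε, hε, hε0, hε1⟩ := hperturb r (toE.symm ν) h0r h1r hwperp
      have hmem2 : r + ε • toE.symm ν ∈ optCone P0 F0 ∩ optCone P1 F1 := ⟨hε0, hε1⟩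
      rw [hray] at hmem2
      obtain ⟨l, hl, heq⟩ := hmem2
      have h1 : ε • (toE.symm ν : Fin d → ℝ) = (l - 1) • r := by
        have h2 : r + ε • (toE.symm ν : Fin d → ℝ) = l • r := heq
        have h3 : ε • (toE.symm ν : Fin d → ℝ) = l • r - r := by
          rw [← h2]; abel
        rw [h3, sub_smul, one_smul]
      have hw : (toE.symm ν : Fin d → ℝ) = ((l - 1) / ε) • r := by
        calc (toE.symm ν : Fin d → ℝ) = ε⁻¹ • (ε • (toE.symm ν : Fin d → ℝ)) := by
              rw [smul_smul, inv_mul_cancel₀ (ne_of_gt hε), one_smul]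
          _ = ε⁻¹ • ((l - 1) • r) := by rw [h1]
          _ = ((l - 1) / ε) • r := by rw [smul_smul, div_eq_inv_mul, mul_comm]
      have : ν = ((l - 1) / ε) • toE r := by
        rw [← hνw, hw, map_smul]
      rw [this]
      exact Submodule.smul_mem _ _ (Submodule.subset_span rfl)
    have hNrank : Module.finrank ℝ ↥(((L0 ⊔ L1).map (toE (n := d)).toLinearMap)ᗮ) = 1 := by
      have hle1 := Submodule.finrank_mono hNle
      rw [finrank_span_singleton htErne] at hle1
      have hge1 := Submodule.finrank_mono
        (Submodule.span_le.mpr (Set.singleton_subset_iff.mpr hrN))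
      rw [finrank_span_singleton htErne] at hge1
      omega
    have := finrank_perp (L0 ⊔ L1)
    omega
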